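/- Let $\psi : \mathbb{R}^n \to \mathbb{R}$ be nonnegative and continuous on a closed convex set $K$, and for $x \in K$ let $B_\psi(x) = \{u \in \mathbb{R}^p : \|u\|_\infty \le \psi(x)\}$. Then the mapping $(u, x) \mapsto N_{B_\psi(x)}(u)$ is outer semicontinuous on $D = \{(u,x) : x \in K, u \in B_\psi(x)\}$: if $(u^\nu, x^\nu) \to (\bar{u}, \bar{x})$ in $D$, $\pi^\nu \in N_{B_\psi(x^\nu)}(u^\nu)$, $\pi^\nu \to \bar{\pi}$, then $\bar{\pi} \in N_{B_\psi(\bar{x})}(\bar{u})$. -/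

import Mathlib

open Filter Topology

/-- The normal cone to a convex set `C` at `u`. -/
def normalCone {p : ℕ} (C : Set (EuclideanSpace ℝ (Fin p)))
    (u : EuclideanSpace ℝ (Fin p)) : Set (EuclideanSpace ℝ (Fin p)) :=
  {v | ∀ y ∈ C, (inner ℝ v (y - u) : ℝ) ≤ 0}

theorem normal_cone_varying_ball_osc {n p : ℕ}
    (K : Set (EuclideanSpace ℝ (Fin n))) (hKcl : IsClosed K) (hKconv : Convex ℝ K)
    (ψ : EuclideanSpace ℝ (Fin n) → ℝ) (hψ0 : ∀ x ∈ K, 0 ≤ ψ x)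
    (hψc : ContinuousOn ψ K)
    (u : ℕ → EuclideanSpace ℝ (Fin p)) (x : ℕ → EuclideanSpace ℝ (Fin n))
    (ub : EuclideanSpace ℝ (Fin p)) (xb : EuclideanSpace ℝ (Fin n))
    (hmem : ∀ ν, x ν ∈ K ∧ ∀ j, |u ν j| ≤ ψ (x ν))
    (hmemb : xb ∈ K ∧ ∀ j, |ub j| ≤ ψ xb)
    (hu : Tendsto u atTop (𝓝 ub)) (hx : Tendsto x atTop (𝓝 xb))
    (π : ℕ → EuclideanSpace ℝ (Fin p)) (πb : EuclideanSpace ℝ (Fin p))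
    (hπ : ∀ ν, π ν ∈ normalCone {w | ∀ j, |w j| ≤ ψ (x ν)} (u ν))
    (hπconv : Tendsto π atTop (𝓝 πb)) :
    πb ∈ normalCone {w | ∀ j, |w j| ≤ ψ xb} ub := by
  intro y hy
  -- ψ (x ν) → ψ xb
  have hxK : Tendsto x atTop (𝓝[K] xb) :=
    tendsto_nhdsWithin_iff.mpr ⟨hx, Eventually.of_forall fun ν => (hmem ν).1⟩
  have hψt : Tendsto (fun ν => ψ (x ν)) atTop (𝓝 (ψ xb)) :=
    (hψc xb hmemb.1).tendsto.comp hxK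
  rcases eq_or_lt_of_le (hψ0 xb hmemb.1) with h0 | hpos
  · -- ψ xb = 0 : then y = ub
    have hyub : y - ub = 0 := by
      ext j
      have h1 := hy j
      have h2 := hmemb.2 j
      rw [← h0] at h1 h2
      have : y j = 0 := abs_nonpos_iff.mp h1
      have : ub j = 0 := abs_nonpos_iff.mp h2
      simp_all
    rw [hyub]
    simp
  · -- ψ xb > 0 : scale y
    set c : ℕ → ℝ := fun ν => ψ (x ν) / ψ xb with hc
    have hct : Tendsto c atTop (𝓝 1) := by
      have := hψt.div tendsto_const_nhds (ne_of_gt hpos)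
      simpa [div_self (ne_of_gt hpos), hc, Pi.div_def] using this
    have hyν : ∀ ν, (∀ j, |(c ν • y) j| ≤ ψ (x ν)) := by
      intro ν j
      have hcnn : 0 ≤ c ν := div_nonneg (hψ0 _ (hmem ν).1) hpos.le
      have : |(c ν • y) j| = c ν * |y j| := by
        simp [abs_mul, abs_of_nonneg hcnn]
      rw [this]
      calc c ν * |y j| ≤ c ν * ψ xb := mul_le_mul_of_nonneg_left (hy j) hcnn
        _ = ψ (x ν) := by simp only [hc]; field_simp [hpos.ne']
    have hle : ∀ ν, (inner ℝ (π ν) (c ν • y - u ν) : ℝ) ≤ 0 :=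
      fun ν => hπ ν (c ν • y) (hyν ν)
    have hyt : Tendsto (fun ν => c ν • y - u ν) atTop (𝓝 (y - ub)) := by
      have := (hct.smul_const y).sub hu
      simpa using this
    have hinner : Tendsto (fun ν => (inner ℝ (π ν) (c ν • y - u ν) : ℝ)) atTop
        (𝓝 (inner ℝ πb (y - ub) : ℝ)) := by
      exact Tendsto.inner hπconv hyt
    exact le_of_tendsto hinner (Eventually.of_forall hle)
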